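/- Let L : ℝ^n → ℝ be convex and suppose for each block k, updating only block k from x^r to its block minimizer decreases L by at least γ‖w_k - x_k^r‖². If x^{r+1} = x^r + (1/K)(w - x^r) where w_k is the k-th block minimizer, then L(x^r) - L(x^{r+1}) ≥ (γ/K)‖w - x^r‖² = γK‖x^{r+1} - x^r‖². -/

import Mathlib

/-- Sufficient descent of the Jacobi update with stepsize `1/K`: if updating only block `k` of
`x^r` to its block minimizer `w_k` decreases the convex function `L` by at least
`γ‖w_k - x_k^r‖²`, and `x^{r+1} = x^r + (1/K)(w - x^r)`, then
`L(x^r) - L(x^{r+1}) ≥ (γ/K)‖w - x^r‖² = γK‖x^{r+1} - x^r‖²`. -/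
theorem stmt_19 {K : ℕ} (hK : 0 < K) (E : Fin K → Type*)
    [∀ k, NormedAddCommGroup (E k)] [∀ k, NormedSpace ℝ (E k)]
    (L : (∀ k, E k) → ℝ) (hconv : ConvexOn ℝ Set.univ L)
    (γ : ℝ) (hγ : 0 < γ)
    (xr w x1 : ∀ k, E k)
    (hmin : ∀ k : Fin K, ∀ u : E k,
      L (Function.update xr k (w k)) ≤ L (Function.update xr k u))
    (hdesc : ∀ k : Fin K,
      L xr - L (Function.update xr k (w k)) ≥ γ * ‖w k - xr k‖ ^ 2)
    (hupd : ∀ k, x1 k = xr k + ((K : ℝ)⁻¹) • (w k - xr k)) :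
    L xr - L x1 ≥ γ / K * ∑ k : Fin K, ‖w k - xr k‖ ^ 2 ∧
      L xr - L x1 ≥ γ * K * ∑ k : Fin K, ‖x1 k - xr k‖ ^ 2 := by
  have hKpos : (0:ℝ) < K := by exact_mod_cast hK
  have hKne : (K:ℝ) ≠ 0 := ne_of_gt hKpos
  -- x1 as convex combination
  have hx1 : x1 = ∑ k : Fin K, (K:ℝ)⁻¹ • Function.update xr k (w k) := by
    funext j
    have : (∑ k : Fin K, (K:ℝ)⁻¹ • Function.update xr k (w k)) j
        = ∑ k : Fin K, (K:ℝ)⁻¹ • Function.update xr k (w k) j := by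
      simp [Finset.sum_apply]
    rw [this, hupd j]
    rw [Finset.sum_eq_add_sum_sdiff_singleton_of_mem (Finset.mem_univ j)]
    have h1 : ∀ k ∈ Finset.univ \ {j},
        (K:ℝ)⁻¹ • Function.update xr k (w k) j = (K:ℝ)⁻¹ • xr j := by
      intro k hk
      simp only [Finset.mem_sdiff, Finset.mem_singleton] at hk
      rw [Function.update_of_ne (Ne.symm hk.2)]
    rw [Finset.sum_congr rfl h1, Finset.sum_const]
    have hcard : (Finset.univ \ {j} : Finset (Fin K)).card = K - 1 := by
      simp [Finset.card_sdiff_of_subset]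
    rw [hcard, Function.update_self, smul_sub]
    have : ((K - 1 : ℕ) : ℝ) = (K:ℝ) - 1 := by
      have : (1:ℕ) ≤ K := hK
      push_cast [this]; ring
    rw [← Nat.cast_smul_eq_nsmul ℝ, this]
    have : ((K:ℝ) - 1) • ((K:ℝ)⁻¹ • xr j) = xr j - (K:ℝ)⁻¹ • xr j := by
      have hc : ((K:ℝ) - 1) * (K:ℝ)⁻¹ = 1 - (K:ℝ)⁻¹ := by field_simp
      rw [smul_smul, hc, sub_smul, one_smul]
    rw [this]
    abel
  have hjensen : L x1 ≤ ∑ k : Fin K, (K:ℝ)⁻¹ * L (Function.update xr k (w k)) := by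
    rw [hx1]
    have := hconv.map_sum_le (t := Finset.univ) (w := fun _ : Fin K => (K:ℝ)⁻¹)
      (p := fun k => Function.update xr k (w k))
      (fun _ _ => by positivity)
      (by simp [Finset.sum_const, hKne])
      (fun _ _ => Set.mem_univ _)
    simpa [smul_eq_mul] using this
  have key : L xr - L x1 ≥ γ / K * ∑ k : Fin K, ‖w k - xr k‖ ^ 2 := by
    have h1 : ∑ k : Fin K, (K:ℝ)⁻¹ * L (Function.update xr k (w k))
        ≤ ∑ k : Fin K, (K:ℝ)⁻¹ * (L xr - γ * ‖w k - xr k‖ ^ 2) := by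
      apply Finset.sum_le_sum
      intro k _
      have := hdesc k
      have hle : L (Function.update xr k (w k)) ≤ L xr - γ * ‖w k - xr k‖ ^ 2 := by
        linarith
      exact mul_le_mul_of_nonneg_left hle (by positivity)
    have h2 : ∑ k : Fin K, (K:ℝ)⁻¹ * (L xr - γ * ‖w k - xr k‖ ^ 2)
        = L xr - γ / K * ∑ k : Fin K, ‖w k - xr k‖ ^ 2 := by
      rw [Finset.sum_congr rfl (fun k _ => by ring : ∀ k ∈ Finset.univ,
        (K:ℝ)⁻¹ * (L xr - γ * ‖w k - xr k‖ ^ 2)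
          = (K:ℝ)⁻¹ * L xr - γ / K * ‖w k - xr k‖ ^ 2)]
      rw [Finset.sum_sub_distrib, Finset.sum_const, ← Finset.mul_sum]
      field_simp
      rw [Finset.card_univ, Fintype.card_fin, nsmul_eq_mul]
      field_simp
    have := hjensen.trans (h1.trans_eq h2)
    linarith
  have hnorm : ∀ k, ‖x1 k - xr k‖ ^ 2 = (K:ℝ)⁻¹ ^ 2 * ‖w k - xr k‖ ^ 2 := by
    intro k
    rw [hupd k]
    have : xr k + (K:ℝ)⁻¹ • (w k - xr k) - xr k = (K:ℝ)⁻¹ • (w k - xr k) := by abel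
    rw [this, norm_smul]
    simp [mul_pow, abs_of_pos (inv_pos.mpr hKpos)]
  refine ⟨key, ?_⟩
  have : γ * K * ∑ k : Fin K, ‖x1 k - xr k‖ ^ 2
      = γ / K * ∑ k : Fin K, ‖w k - xr k‖ ^ 2 := by
    rw [Finset.sum_congr rfl (fun k _ => hnorm k), ← Finset.mul_sum]
    field_simp
  rw [this]; exact key
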